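/- Let Z be a nonnegative random variable whose tail F̄_Z is regularly varying with index -β, β > 2, and let δ ∈ [2, β). Then E[(Z - xs)₊^δ] ~ C_δ · x^δ · F̄_Z(x) · s^{δ-β} as x → ∞ for each fixed s > 0, where C_δ = δ·∫₁^∞ (z-1)^{δ-1} z^{-β} dz. -/

import Mathlib

open MeasureTheory Filter Set
open scoped ENNReal NNReal

section Aux


lemma aux_layercake {Ω : Type*} [MeasurableSpace Ω] (μ : Measure Ω) [IsProbabilityMeasure μ]
    (Z : Ω → ℝ) (hZ : Measurable Z) {δ : ℝ} (hδ : 0 < δ) {x : ℝ} (hx : 0 < x) :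
    ∫⁻ ω, ENNReal.ofReal ((max (Z ω - x) 0) ^ δ) ∂μ
      = ENNReal.ofReal δ * (ENNReal.ofReal (x ^ δ) *
        ∫⁻ z in Set.Ioi (1:ℝ), μ {ω | x * z < Z ω} * ENNReal.ofReal ((z - 1) ^ (δ - 1)) ∂volume) := by
  have f_nn : 0 ≤ᵐ[μ] fun ω => max (Z ω - x) 0 := .of_forall fun ω => le_max_right _ _
  have f_mble : AEMeasurable (fun ω => max (Z ω - x) 0) μ :=
    ((hZ.sub measurable_const).max measurable_const).aemeasurable
  rw [lintegral_rpow_eq_lintegral_meas_lt_mul μ f_nn f_mble hδ]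
  congr 1
  -- rewrite the sets
  have h1 : ∫⁻ t in Ioi (0:ℝ), μ {a | t < max (Z a - x) 0} * ENNReal.ofReal (t ^ (δ - 1))
      = ∫⁻ t in Ioi (0:ℝ), (fun u => μ {a | u < Z a} * ENNReal.ofReal ((u - x) ^ (δ - 1))) (x + t) := by
    apply setLIntegral_congr_fun measurableSet_Ioi
    intro t ht
    have ht0 : (0:ℝ) < t := ht
    have hset : {a | t < max (Z a - x) 0} = {a | x + t < Z a} := by
      ext a
      simp only [Set.mem_setOf_eq, lt_max_iff]
      constructor
      · rintro (h | h)
        · linarith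
        · linarith
      · intro h; left; linarith
    simp only [hset, add_sub_cancel_left]
  rw [h1]
  -- translation t ↦ x + t
  have e1 : MeasurableEmbedding (fun t : ℝ => x + t) := measurableEmbedding_addLeft x
  have h2 : ∫⁻ t in Ioi (0:ℝ), (fun u => μ {a | u < Z a} * ENNReal.ofReal ((u - x) ^ (δ - 1))) (x + t)
      = ∫⁻ u in Ioi x, μ {a | u < Z a} * ENNReal.ofReal ((u - x) ^ (δ - 1)) := by
    conv_rhs => rw [← map_add_left_eq_self (volume : Measure ℝ) x]
    rw [Measure.restrict_map e1.measurable measurableSet_Ioi, e1.lintegral_map]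
    congr 1
    ext t
    simp [lt_add_iff_pos_right]
  rw [h2]
  -- scaling u = x * z
  have e2 : MeasurableEmbedding (fun z : ℝ => x * z) := measurableEmbedding_mulLeft₀ hx.ne'
  have h3 : ∫⁻ u in Ioi x, μ {a | u < Z a} * ENNReal.ofReal ((u - x) ^ (δ - 1))
      = ENNReal.ofReal x * ∫⁻ z in Ioi (1:ℝ),
          μ {a | x * z < Z a} * ENNReal.ofReal ((x * z - x) ^ (δ - 1)) := by
    conv_lhs => rw [← Real.smul_map_volume_mul_left hx.ne']
    rw [Measure.restrict_smul, lintegral_smul_measure,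
      Measure.restrict_map e2.measurable measurableSet_Ioi, e2.lintegral_map,
      abs_of_pos hx]
    congr 2
    have : (fun z : ℝ => x * z) ⁻¹' Ioi x = Ioi (1:ℝ) := by
      ext z
      simp only [mem_preimage, mem_Ioi]
      constructor
      · intro h; nlinarith
      · intro h; nlinarith
    rw [this]
  rw [h3]
  -- pull out the constant x^(δ-1)
  have h4 : ∀ z ∈ Ioi (1:ℝ),
      μ {a | x * z < Z a} * ENNReal.ofReal ((x * z - x) ^ (δ - 1))
        = ENNReal.ofReal (x ^ (δ - 1)) * (μ {a | x * z < Z a} * ENNReal.ofReal ((z - 1) ^ (δ - 1))) := by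
    intro z hz
    have hz1 : (1:ℝ) ≤ z := le_of_lt hz
    have : x * z - x = x * (z - 1) := by ring
    rw [this, Real.mul_rpow hx.le (by linarith), ENNReal.ofReal_mul (Real.rpow_nonneg hx.le _)]
    ring
  rw [setLIntegral_congr_fun measurableSet_Ioi h4, lintegral_const_mul' _ _ ENNReal.ofReal_ne_top,
    ← mul_assoc, ← ENNReal.ofReal_mul hx.le]
  congr 2
  calc x * x ^ (δ - 1) = x ^ (1:ℝ) * x ^ (δ - 1) := by rw [Real.rpow_one]
  _ = x ^ δ := by rw [← Real.rpow_add hx]; ring_nf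


lemma aux_ratio {Ω : Type*} [MeasurableSpace Ω] (μ : Measure Ω) [IsProbabilityMeasure μ]
    (Z : Ω → ℝ) (Fbar : ℝ → ℝ) (hFbar : ∀ x, Fbar x = (μ {ω | x < Z ω}).toReal)
    (hpos : ∀ x : ℝ, 0 < Fbar x) {β : ℝ}
    (hRV2 : Tendsto (fun x : ℝ => Fbar (2 * x) / Fbar x) atTop (nhds ((2:ℝ) ^ (-β))))
    {c : ℝ} (hc : (2:ℝ) ^ (-β) < c) :
    ∃ x₀ : ℝ, 1 ≤ x₀ ∧ ∀ y ≥ x₀,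
      μ {ω | 2 * y < Z ω} ≤ ENNReal.ofReal c * μ {ω | y < Z ω} := by
  have hev := hRV2.eventually_lt_const hc
  rw [eventually_atTop] at hev
  obtain ⟨x₀', hx₀'⟩ := hev
  refine ⟨max x₀' 1, le_max_right _ _, fun y hy => ?_⟩
  have h1 := hx₀' y (le_trans (le_max_left _ _) hy)
  have h2 : Fbar (2 * y) ≤ c * Fbar y := by
    rw [div_lt_iff₀ (hpos y)] at h1
    linarith
  have hfin : ∀ u : ℝ, μ {ω | u < Z ω} ≠ ⊤ := fun u => measure_ne_top μ _
  have e1 : μ {ω | 2 * y < Z ω} = ENNReal.ofReal (Fbar (2 * y)) := by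
    rw [hFbar, ENNReal.ofReal_toReal (hfin _)]
  have e2 : μ {ω | y < Z ω} = ENNReal.ofReal (Fbar y) := by
    rw [hFbar, ENNReal.ofReal_toReal (hfin _)]
  rw [e1, e2, ← ENNReal.ofReal_mul (le_trans (Real.rpow_nonneg (by norm_num) _) hc.le)]
  exact ENNReal.ofReal_le_ofReal h2

lemma aux_chain {Ω : Type*} [MeasurableSpace Ω] (μ : Measure Ω)
    (Z : Ω → ℝ) {c x₀ : ℝ} (hx₀ : 1 ≤ x₀)
    (hstep : ∀ y ≥ x₀, μ {ω | 2 * y < Z ω} ≤ ENNReal.ofReal c * μ {ω | y < Z ω}) :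
    ∀ x ≥ x₀, ∀ j : ℕ, μ {ω | x * 2 ^ j < Z ω} ≤ ENNReal.ofReal c ^ j * μ {ω | x < Z ω} := by
  intro x hx j
  induction j with
  | zero => simp
  | succ j ih =>
    have hxj : x₀ ≤ x * 2 ^ j := by
      calc x₀ ≤ x := hx
      _ = x * 1 := (mul_one x).symm
      _ ≤ x * 2 ^ j := by
        apply mul_le_mul_of_nonneg_left _ (by linarith : (0:ℝ) ≤ x)
        exact one_le_pow₀ (by norm_num)
    have := hstep (x * 2 ^ j) hxj
    have heq : x * 2 ^ (j + 1) = 2 * (x * 2 ^ j) := by ring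
    rw [heq]
    calc μ {ω | 2 * (x * 2 ^ j) < Z ω} ≤ ENNReal.ofReal c * μ {ω | x * 2 ^ j < Z ω} := this
    _ ≤ ENNReal.ofReal c * (ENNReal.ofReal c ^ j * μ {ω | x < Z ω}) :=
        mul_le_mul_right ih _
    _ = ENNReal.ofReal c ^ (j + 1) * μ {ω | x < Z ω} := by ring


lemma aux_pow_calc {δ c : ℝ} :
    ∀ j : ℕ, c ^ j * ((2:ℝ) ^ (j + 1)) ^ (δ - 1) * (2:ℝ) ^ j
      = (2:ℝ) ^ (δ - 1) * ((2:ℝ) ^ δ * c) ^ j := by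
  have h3 : (2:ℝ) ^ (δ - 1) * 2 = (2:ℝ) ^ δ := by
    rw [Real.rpow_sub two_pos, Real.rpow_one]
    field_simp
  intro j
  induction j with
  | zero => norm_num
  | succ j ih =>
    have h2 : ((2:ℝ) ^ (j + 1 + 1)) ^ (δ - 1) = (2:ℝ) ^ (δ - 1) * ((2:ℝ) ^ (j + 1)) ^ (δ - 1) := by
      rw [pow_succ, mul_comm ((2:ℝ) ^ (j+1)) 2, Real.mul_rpow (by norm_num) (by positivity)]
    calc c ^ (j+1) * ((2:ℝ) ^ (j + 1 + 1)) ^ (δ - 1) * (2:ℝ) ^ (j+1)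
        = (c ^ j * ((2:ℝ) ^ (j + 1)) ^ (δ - 1) * (2:ℝ) ^ j) * (c * ((2:ℝ) ^ (δ - 1) * 2)) := by
          rw [h2]; ring
      _ = ((2:ℝ) ^ (δ - 1) * ((2:ℝ) ^ δ * c) ^ j) * (c * (2:ℝ) ^ δ) := by rw [ih, h3]
      _ = (2:ℝ) ^ (δ - 1) * ((2:ℝ) ^ δ * c) ^ (j + 1) := by rw [pow_succ]; ring

lemma aux_tail {Ω : Type*} [MeasurableSpace Ω] (μ : Measure Ω) [IsProbabilityMeasure μ]
    (Z : Ω → ℝ) {δ c x₀ : ℝ} (hδ1 : 2 ≤ δ) (hc0 : 0 ≤ c) (hx₀ : 1 ≤ x₀)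
    (hchain : ∀ x ≥ x₀, ∀ j : ℕ, μ {ω | x * 2 ^ j < Z ω} ≤ ENNReal.ofReal c ^ j * μ {ω | x < Z ω})
    {x : ℝ} (hx : x₀ ≤ x) (m : ℕ) :
    ∫⁻ z in Ioi ((2:ℝ) ^ m), μ {ω | x * z < Z ω} * ENNReal.ofReal ((z - 1) ^ (δ - 1)) ∂volume
      ≤ ENNReal.ofReal ((2:ℝ) ^ (δ - 1)) * ENNReal.ofReal ((2:ℝ) ^ δ * c) ^ m *
          (1 - ENNReal.ofReal ((2:ℝ) ^ δ * c))⁻¹ * μ {ω | x < Z ω} := by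
  have hx0 : (0:ℝ) < x := lt_of_lt_of_le zero_lt_one (le_trans hx₀ hx)
  set q : ℝ := (2:ℝ) ^ δ * c with hqdef
  have hq0 : 0 ≤ q := mul_nonneg (Real.rpow_nonneg (by norm_num) _) hc0
  -- covering
  have hcov : Ioi ((2:ℝ) ^ m) ⊆ ⋃ k : ℕ, Ico ((2:ℝ) ^ (m + k)) ((2:ℝ) ^ (m + k + 1)) := by
    intro z hz
    have hzm : (2:ℝ) ^ m < z := hz
    have hz1 : (1:ℝ) ≤ z := le_of_lt (lt_of_le_of_lt (one_le_pow₀ (by norm_num)) hzm)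
    obtain ⟨n, hn1, hn2⟩ := exists_nat_pow_near hz1 (by norm_num : (1:ℝ) < 2)
    have hmn : m ≤ n := by
      by_contra h
      push_neg at h
      have h' : (2:ℝ) ^ (n + 1) ≤ (2:ℝ) ^ m :=
        pow_le_pow_right₀ (by norm_num) (by omega)
      linarith
    refine Set.mem_iUnion.mpr ⟨n - m, ?_⟩
    have hnm : m + (n - m) = n := by omega
    rw [hnm]
    exact ⟨hn1, hn2⟩
  refine le_trans (lintegral_mono_set hcov) ?_
  refine le_trans (lintegral_iUnion_le _ _) ?_
  -- block bounds
  have hblock : ∀ k : ℕ,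
      ∫⁻ z in Ico ((2:ℝ) ^ (m + k)) ((2:ℝ) ^ (m + k + 1)),
        μ {ω | x * z < Z ω} * ENNReal.ofReal ((z - 1) ^ (δ - 1)) ∂volume
      ≤ ENNReal.ofReal ((2:ℝ) ^ (δ - 1)) * ENNReal.ofReal q ^ (m + k) * μ {ω | x < Z ω} := by
    intro k
    set j := m + k with hj
    have hpow1 : (1:ℝ) ≤ (2:ℝ) ^ j := one_le_pow₀ (by norm_num)
    have hbd : ∀ z ∈ Ico ((2:ℝ) ^ j) ((2:ℝ) ^ (j + 1)),
        μ {ω | x * z < Z ω} * ENNReal.ofReal ((z - 1) ^ (δ - 1))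
          ≤ (ENNReal.ofReal c ^ j * μ {ω | x < Z ω}) * ENNReal.ofReal (((2:ℝ) ^ (j + 1)) ^ (δ - 1)) := by
      intro z hz
      have h1 : μ {ω | x * z < Z ω} ≤ μ {ω | x * 2 ^ j < Z ω} := by
        apply measure_mono
        intro ω hω
        simp only [Set.mem_setOf_eq] at hω ⊢
        have : x * 2 ^ j ≤ x * z := mul_le_mul_of_nonneg_left hz.1 hx0.le
        linarith
      have h2 : ENNReal.ofReal ((z - 1) ^ (δ - 1)) ≤ ENNReal.ofReal (((2:ℝ) ^ (j + 1)) ^ (δ - 1)) := by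
        apply ENNReal.ofReal_le_ofReal
        apply Real.rpow_le_rpow (by linarith [hz.1] : (0:ℝ) ≤ z - 1) _ (by linarith)
        have := hz.2
        linarith
      exact mul_le_mul (le_trans h1 (hchain x hx j)) h2 zero_le zero_le
    calc ∫⁻ z in Ico ((2:ℝ) ^ (m + k)) ((2:ℝ) ^ (m + k + 1)),
          μ {ω | x * z < Z ω} * ENNReal.ofReal ((z - 1) ^ (δ - 1)) ∂volume
        ≤ ∫⁻ _ in Ico ((2:ℝ) ^ j) ((2:ℝ) ^ (j + 1)),
            (ENNReal.ofReal c ^ j * μ {ω | x < Z ω}) * ENNReal.ofReal (((2:ℝ) ^ (j + 1)) ^ (δ - 1)) ∂volume :=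
          setLIntegral_mono' measurableSet_Ico hbd
      _ = (ENNReal.ofReal c ^ j * μ {ω | x < Z ω}) * ENNReal.ofReal (((2:ℝ) ^ (j + 1)) ^ (δ - 1)) *
            ENNReal.ofReal ((2:ℝ) ^ j) := by
          rw [setLIntegral_const, Real.volume_Ico]
          congr 2
          ring_nf
      _ = ENNReal.ofReal (c ^ j * ((2:ℝ) ^ (j + 1)) ^ (δ - 1) * (2:ℝ) ^ j) * μ {ω | x < Z ω} := by
          rw [← ENNReal.ofReal_pow hc0, ENNReal.ofReal_mul (by positivity),
            ENNReal.ofReal_mul (by positivity)]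
          ring
      _ = ENNReal.ofReal ((2:ℝ) ^ (δ - 1) * q ^ j) * μ {ω | x < Z ω} := by
          rw [aux_pow_calc]
      _ = ENNReal.ofReal ((2:ℝ) ^ (δ - 1)) * ENNReal.ofReal q ^ (m + k) * μ {ω | x < Z ω} := by
          rw [ENNReal.ofReal_mul (by positivity), ENNReal.ofReal_pow hq0]
  refine le_trans (ENNReal.tsum_le_tsum hblock) ?_
  have : ∀ k : ℕ, ENNReal.ofReal ((2:ℝ) ^ (δ - 1)) * ENNReal.ofReal q ^ (m + k) * μ {ω | x < Z ω}
      = (ENNReal.ofReal ((2:ℝ) ^ (δ - 1)) * ENNReal.ofReal q ^ m * μ {ω | x < Z ω}) *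
          ENNReal.ofReal q ^ k := by
    intro k
    rw [pow_add]
    ring
  rw [tsum_congr this, ENNReal.tsum_mul_left, ENNReal.tsum_geometric]
  apply le_of_eq
  ring


lemma aux_g_cont {δ β : ℝ} (hδ : 2 ≤ δ) :
    ContinuousOn (fun z : ℝ => (z - 1) ^ (δ - 1) * z ^ (-β)) (Ioi (1:ℝ)) := by
  apply ContinuousOn.mul
  · exact ((Real.continuous_rpow_const (by linarith)).comp (continuous_id.sub continuous_const)).continuousOn
  · intro z hz
    have hz1 : (1:ℝ) < z := hz
    exact (Real.continuousAt_rpow_const z (-β) (Or.inl (by linarith))).continuousWithinAt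

lemma aux_g_integrable {δ β : ℝ} (hδ : 2 ≤ δ) (hδβ : δ < β) :
    IntegrableOn (fun z : ℝ => (z - 1) ^ (δ - 1) * z ^ (-β)) (Ioi (1:ℝ)) volume := by
  apply Integrable.mono (g := fun z : ℝ => z ^ (δ - 1 - β))
    (integrableOn_Ioi_rpow_of_lt (by linarith) one_pos)
  · exact (aux_g_cont hδ).aestronglyMeasurable measurableSet_Ioi
  · refine (ae_restrict_iff' measurableSet_Ioi).mpr (.of_forall fun z hz => ?_)
    have hz1 : (1:ℝ) < z := hz
    have h1 : (0:ℝ) ≤ (z - 1) ^ (δ - 1) := Real.rpow_nonneg (by linarith) _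
    have h2 : (0:ℝ) ≤ z ^ (-β) := Real.rpow_nonneg (by linarith) _
    rw [Real.norm_eq_abs, Real.norm_eq_abs, abs_of_nonneg (mul_nonneg h1 h2),
      abs_of_nonneg (Real.rpow_nonneg (by linarith) _)]
    calc (z - 1) ^ (δ - 1) * z ^ (-β) ≤ z ^ (δ - 1) * z ^ (-β) := by
          apply mul_le_mul_of_nonneg_right _ h2
          exact Real.rpow_le_rpow (by linarith) (by linarith) (by linarith)
      _ = z ^ (δ - 1 - β) := by
          rw [← Real.rpow_add (by linarith)]
          ring_nf

lemma aux_Im_tendsto {δ β : ℝ} (hδ : 2 ≤ δ) (hδβ : δ < β) :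
    Tendsto (fun m : ℕ => ∫ z in Ioc (1:ℝ) ((2:ℝ) ^ m), (z - 1) ^ (δ - 1) * z ^ (-β) ∂volume)
      atTop (nhds (∫ z in Ioi (1:ℝ), (z - 1) ^ (δ - 1) * z ^ (-β) ∂volume)) := by
  have hU : ⋃ m : ℕ, Ioc (1:ℝ) ((2:ℝ) ^ m) = Ioi (1:ℝ) := by
    ext z
    simp only [mem_iUnion, mem_Ioc, mem_Ioi]
    constructor
    · rintro ⟨m, h1, _⟩; exact h1
    · intro h
      obtain ⟨m, hm⟩ := pow_unbounded_of_one_lt z (by norm_num : (1:ℝ) < 2)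
      exact ⟨m, h, hm.le⟩
  have := tendsto_setIntegral_of_monotone (μ := volume)
    (s := fun m : ℕ => Ioc (1:ℝ) ((2:ℝ) ^ m))
    (f := fun z : ℝ => (z - 1) ^ (δ - 1) * z ^ (-β))
    (fun m => measurableSet_Ioc)
    (fun a b hab => Ioc_subset_Ioc le_rfl (pow_le_pow_right₀ (by norm_num) hab))
    (by rw [hU]; exact aux_g_integrable hδ hδβ)
  rwa [hU] at this


lemma aux_nu_anti {Ω : Type*} [MeasurableSpace Ω] (μ : Measure Ω) (Z : Ω → ℝ) :
    Antitone (fun u : ℝ => μ {ω | u < Z ω}) :=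
  fun u v huv => measure_mono (fun ω hω => lt_of_le_of_lt huv hω)

lemma aux_Fbar_anti {Ω : Type*} [MeasurableSpace Ω] (μ : Measure Ω) [IsProbabilityMeasure μ]
    (Z : Ω → ℝ) (Fbar : ℝ → ℝ) (hFbar : ∀ x, Fbar x = (μ {ω | x < Z ω}).toReal) :
    Antitone Fbar := by
  intro u v huv
  rw [hFbar, hFbar]
  exact ENNReal.toReal_mono (measure_ne_top μ _) (aux_nu_anti μ Z huv)

lemma aux_Fbar_nonneg {Ω : Type*} [MeasurableSpace Ω] (μ : Measure Ω)
    (Z : Ω → ℝ) (Fbar : ℝ → ℝ) (hFbar : ∀ x, Fbar x = (μ {ω | x < Z ω}).toReal) (x : ℝ) :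
    0 ≤ Fbar x := by rw [hFbar]; exact ENNReal.toReal_nonneg

lemma aux_dct {Ω : Type*} [MeasurableSpace Ω] (μ : Measure Ω) [IsProbabilityMeasure μ]
    (Z : Ω → ℝ) (Fbar : ℝ → ℝ) (hFbar : ∀ x, Fbar x = (μ {ω | x < Z ω}).toReal)
    (hpos : ∀ x : ℝ, 0 < Fbar x) {β δ : ℝ} (hδ : 2 ≤ δ)
    (hRV : ∀ s : ℝ, 0 < s →
      Tendsto (fun x : ℝ => Fbar (s * x) / Fbar x) atTop (nhds (s ^ (-β))))
    {M : ℝ} (hM : 1 ≤ M) :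
    Tendsto (fun y : ℝ => ∫ z in Ioc (1:ℝ) M, (z - 1) ^ (δ - 1) * (Fbar (y * z) / Fbar y) ∂volume)
      atTop
      (nhds (∫ z in Ioc (1:ℝ) M, (z - 1) ^ (δ - 1) * z ^ (-β) ∂volume)) := by
  have hFanti := aux_Fbar_anti μ Z Fbar hFbar
  have hFmeas : Measurable Fbar := hFanti.measurable
  apply tendsto_integral_filter_of_dominated_convergence (bound := fun _ => M ^ (δ - 1))
  · refine .of_forall fun y => ?_
    apply Measurable.aestronglyMeasurable
    exact ((Real.continuous_rpow_const (by linarith)).comp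
      (continuous_id.sub continuous_const)).measurable.mul
      ((hFmeas.comp (measurable_const_mul y)).div_const _)
  · filter_upwards [eventually_ge_atTop (1:ℝ)] with y hy
    refine (ae_restrict_iff' measurableSet_Ioc).mpr (.of_forall fun z hz => ?_)
    have hz1 : (1:ℝ) < z := hz.1
    have hFz : Fbar (y * z) ≤ Fbar y := by
      apply hFanti
      nlinarith
    have hr0 : 0 ≤ Fbar (y * z) / Fbar y :=
      div_nonneg (aux_Fbar_nonneg μ Z Fbar hFbar _) (hpos y).le
    have hr1 : Fbar (y * z) / Fbar y ≤ 1 := (div_le_one (hpos y)).mpr hFz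
    have h1 : (0:ℝ) ≤ (z - 1) ^ (δ - 1) := Real.rpow_nonneg (by linarith) _
    rw [Real.norm_eq_abs, abs_of_nonneg (mul_nonneg h1 hr0)]
    calc (z - 1) ^ (δ - 1) * (Fbar (y * z) / Fbar y) ≤ (z - 1) ^ (δ - 1) * 1 :=
          mul_le_mul_of_nonneg_left hr1 h1
      _ = (z - 1) ^ (δ - 1) := mul_one _
      _ ≤ M ^ (δ - 1) := by
          apply Real.rpow_le_rpow (by linarith) _ (by linarith)
          have := hz.2
          linarith
  · exact integrableOn_const measure_Ioc_lt_top.ne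
  · refine (ae_restrict_iff' measurableSet_Ioc).mpr (.of_forall fun z hz => ?_)
    have hz1 : (1:ℝ) < z := hz.1
    have := hRV z (by linarith)
    have h2 : Tendsto (fun y : ℝ => Fbar (y * z) / Fbar y) atTop (nhds (z ^ (-β))) := by
      refine this.congr fun y => ?_
      rw [mul_comm]
    exact h2.const_mul _


lemma aux_compact_eq {Ω : Type*} [MeasurableSpace Ω] (μ : Measure Ω) [IsProbabilityMeasure μ]
    (Z : Ω → ℝ) (Fbar : ℝ → ℝ) (hFbar : ∀ x, Fbar x = (μ {ω | x < Z ω}).toReal)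
    {δ : ℝ} (hδ : 2 ≤ δ) (y M : ℝ) :
    (∫⁻ z in Ioc (1:ℝ) M, μ {ω | y * z < Z ω} * ENNReal.ofReal ((z - 1) ^ (δ - 1)) ∂volume).toReal
      = ∫ z in Ioc (1:ℝ) M, (z - 1) ^ (δ - 1) * Fbar (y * z) ∂volume := by
  have hanti : Antitone (fun u : ℝ => μ {ω | u < Z ω}) :=
    fun u v huv => measure_mono (fun ω hω => lt_of_le_of_lt huv hω)
  have hFanti : Antitone Fbar := by
    intro u v huv
    rw [hFbar, hFbar]
    exact ENNReal.toReal_mono (measure_ne_top μ _) (hanti huv)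
  have hmeas : AEStronglyMeasurable (fun z : ℝ => (z - 1) ^ (δ - 1) * Fbar (y * z))
      (volume.restrict (Ioc (1:ℝ) M)) := by
    apply Measurable.aestronglyMeasurable
    exact ((Real.continuous_rpow_const (by linarith)).comp
      (continuous_id.sub continuous_const)).measurable.mul
      (hFanti.measurable.comp (measurable_const_mul y))
  have hnn : 0 ≤ᵐ[volume.restrict (Ioc (1:ℝ) M)]
      fun z : ℝ => (z - 1) ^ (δ - 1) * Fbar (y * z) := by
    refine (ae_restrict_iff' measurableSet_Ioc).mpr (.of_forall fun z hz => ?_)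
    have hz1 : (1:ℝ) < z := hz.1
    have h0 : 0 ≤ Fbar (y * z) := by rw [hFbar]; exact ENNReal.toReal_nonneg
    exact mul_nonneg (Real.rpow_nonneg (by linarith) _) h0
  rw [integral_eq_lintegral_of_nonneg_ae hnn hmeas]
  congr 1
  apply setLIntegral_congr_fun measurableSet_Ioc
  intro z hz
  have hz1 : (1:ℝ) < z := hz.1
  dsimp only
  rw [ENNReal.ofReal_mul (Real.rpow_nonneg (by linarith) _), hFbar,
    ENNReal.ofReal_toReal (measure_ne_top μ _), mul_comm]

lemma aux_K_fin {Ω : Type*} [MeasurableSpace Ω] (μ : Measure Ω) [IsProbabilityMeasure μ]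
    (Z : Ω → ℝ) (Fbar : ℝ → ℝ) (hFbar : ∀ x, Fbar x = (μ {ω | x < Z ω}).toReal)
    (hpos : ∀ x : ℝ, 0 < Fbar x) {β δ : ℝ} (hδ : 2 ≤ δ) (hδβ : δ < β)
    (hRV : ∀ s : ℝ, 0 < s →
      Tendsto (fun x : ℝ => Fbar (s * x) / Fbar x) atTop (nhds (s ^ (-β)))) :
    ∃ x₀ : ℝ, 1 ≤ x₀ ∧ ∀ y ≥ x₀,
      (∫⁻ z in Ioi (1:ℝ), μ {ω | y * z < Z ω} * ENNReal.ofReal ((z - 1) ^ (δ - 1)) ∂volume) ≠ ⊤ := by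
  set u : ℝ := (2:ℝ) ^ (δ - β) with hu
  have hu1 : u < 1 := Real.rpow_lt_one_of_one_lt_of_neg (by norm_num) (by linarith)
  have hu0 : 0 < u := Real.rpow_pos_of_pos (by norm_num) _
  set q : ℝ := (u + 1) / 2 with hqdef
  have hq0 : 0 < q := by rw [hqdef]; linarith
  have h2δ : (0:ℝ) < (2:ℝ) ^ δ := Real.rpow_pos_of_pos (by norm_num) _
  set c : ℝ := q / (2:ℝ) ^ δ with hcdef
  have hc0 : 0 ≤ c := le_of_lt (div_pos hq0 h2δ)
  have hcβ : (2:ℝ) ^ (-β) < c := by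
    rw [hcdef, lt_div_iff₀ h2δ]
    calc (2:ℝ) ^ (-β) * 2 ^ δ = u := by
          rw [hu, ← Real.rpow_add (by norm_num)]
          ring_nf
      _ < q := by rw [hqdef]; linarith
  obtain ⟨x₀, hx₀1, hstep⟩ := aux_ratio μ Z Fbar hFbar hpos (hRV 2 (by norm_num)) hcβ
  have hchain := aux_chain μ Z hx₀1 hstep
  have hq1 : q < 1 := by rw [hqdef]; linarith
  have hqc : (2:ℝ) ^ δ * c = q := by rw [hcdef]; field_simp
  refine ⟨x₀, hx₀1, fun y hy => ?_⟩
  have h1 : Ioi (1:ℝ) = Ioi ((2:ℝ) ^ (0:ℕ)) := by norm_num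
  rw [h1]
  refine ne_top_of_le_ne_top ?_ (aux_tail μ Z hδ hc0 hx₀1 hchain hy 0)
  have h5 : (1:ℝ≥0∞) - ENNReal.ofReal ((2:ℝ) ^ δ * c) ≠ 0 := by
    rw [hqc]
    have : ENNReal.ofReal q < 1 := by
      rw [← ENNReal.ofReal_one]
      exact ENNReal.ofReal_lt_ofReal_iff_of_nonneg hq0.le |>.mpr hq1
    simp only [ne_eq, tsub_eq_zero_iff_le, not_le]
    exact this
  apply ENNReal.mul_ne_top
  apply ENNReal.mul_ne_top
  apply ENNReal.mul_ne_top
  · exact ENNReal.ofReal_ne_top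
  · exact ENNReal.pow_ne_top ENNReal.ofReal_ne_top
  · exact ENNReal.inv_ne_top.mpr h5
  · exact measure_ne_top μ _

lemma aux_ratio_limit {Ω : Type*} [MeasurableSpace Ω] (μ : Measure Ω) [IsProbabilityMeasure μ]
    (Z : Ω → ℝ) (Fbar : ℝ → ℝ) (hFbar : ∀ x, Fbar x = (μ {ω | x < Z ω}).toReal)
    (hpos : ∀ x : ℝ, 0 < Fbar x) {β δ : ℝ} (hδ : 2 ≤ δ) (hδβ : δ < β)
    (hRV : ∀ s : ℝ, 0 < s →
      Tendsto (fun x : ℝ => Fbar (s * x) / Fbar x) atTop (nhds (s ^ (-β)))) :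
    Tendsto (fun y : ℝ =>
        (∫⁻ z in Ioi (1:ℝ), μ {ω | y * z < Z ω} * ENNReal.ofReal ((z - 1) ^ (δ - 1)) ∂volume).toReal
          / Fbar y)
      atTop
      (nhds (∫ z in Ioi (1:ℝ), (z - 1) ^ (δ - 1) * z ^ (-β) ∂volume)) := by
  -- constants
  set u : ℝ := (2:ℝ) ^ (δ - β) with hu
  have hu1 : u < 1 := Real.rpow_lt_one_of_one_lt_of_neg (by norm_num) (by linarith)
  have hu0 : 0 < u := Real.rpow_pos_of_pos (by norm_num) _
  set q : ℝ := (u + 1) / 2 with hqdef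
  have hq1 : q < 1 := by rw [hqdef]; linarith
  have hq0 : 0 < q := by rw [hqdef]; linarith
  have h2δ : (0:ℝ) < (2:ℝ) ^ δ := Real.rpow_pos_of_pos (by norm_num) _
  set c : ℝ := q / (2:ℝ) ^ δ with hcdef
  have hc0 : 0 ≤ c := le_of_lt (div_pos hq0 h2δ)
  have hqc : (2:ℝ) ^ δ * c = q := by rw [hcdef]; field_simp
  have huq : u < q := by rw [hqdef]; linarith
  have hcβ : (2:ℝ) ^ (-β) < c := by
    rw [hcdef, lt_div_iff₀ h2δ]
    calc (2:ℝ) ^ (-β) * 2 ^ δ = u := by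
          rw [hu, ← Real.rpow_add (by norm_num)]
          ring_nf
      _ < q := huq
  -- the step bound from regular variation
  obtain ⟨x₀, hx₀1, hstep⟩ := aux_ratio μ Z Fbar hFbar hpos (hRV 2 (by norm_num)) hcβ
  have hchain := aux_chain μ Z hx₀1 hstep
  -- real form of the tail bound
  set A : ℝ := (2:ℝ) ^ (δ - 1) * (1 - q)⁻¹ with hA
  have hA0 : 0 ≤ A := mul_nonneg (Real.rpow_nonneg (by norm_num) _) (by
    rw [inv_nonneg]; linarith)
  have htail_enn : ∀ x ≥ x₀, ∀ m : ℕ,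
      ∫⁻ z in Ioi ((2:ℝ) ^ m), μ {ω | x * z < Z ω} * ENNReal.ofReal ((z - 1) ^ (δ - 1)) ∂volume
        ≤ ENNReal.ofReal (A * q ^ m * Fbar x) := by
    intro x hx m
    refine le_trans (aux_tail μ Z hδ hc0 hx₀1 hchain hx m) (le_of_eq ?_)
    rw [hqc]
    have h1 : (1:ℝ≥0∞) - ENNReal.ofReal q = ENNReal.ofReal (1 - q) := by
      rw [ENNReal.ofReal_sub _ hq0.le, ENNReal.ofReal_one]
    rw [h1, ← ENNReal.ofReal_inv_of_pos (by linarith), ← ENNReal.ofReal_pow hq0.le]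
    have h2 : μ {ω | x < Z ω} = ENNReal.ofReal (Fbar x) := by
      rw [hFbar, ENNReal.ofReal_toReal (measure_ne_top μ _)]
    have hn1 : (0:ℝ) ≤ (2:ℝ) ^ (δ - 1) * q ^ m :=
      mul_nonneg (Real.rpow_nonneg (by norm_num) _) (pow_nonneg hq0.le m)
    rw [h2, ← ENNReal.ofReal_mul (Real.rpow_nonneg (by norm_num) _),
      ← ENNReal.ofReal_mul hn1,
      ← ENNReal.ofReal_mul (mul_nonneg hn1 (inv_nonneg.mpr (by linarith)))]
    congr 1
    rw [hA]
    ring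
  have htail_real : ∀ x ≥ x₀, ∀ m : ℕ,
      (∫⁻ z in Ioi ((2:ℝ) ^ m),
          μ {ω | x * z < Z ω} * ENNReal.ofReal ((z - 1) ^ (δ - 1)) ∂volume).toReal
        ≤ A * q ^ m * Fbar x := by
    intro x hx m
    refine le_trans (ENNReal.toReal_mono ENNReal.ofReal_ne_top (htail_enn x hx m)) ?_
    rw [ENNReal.toReal_ofReal (mul_nonneg (mul_nonneg hA0 (pow_nonneg hq0.le m)) (hpos x).le)]
  -- finiteness
  have hfin : ∀ x ≥ x₀, ∀ M : ℝ, 1 ≤ M →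
      ∫⁻ z in Ioi M, μ {ω | x * z < Z ω} * ENNReal.ofReal ((z - 1) ^ (δ - 1)) ∂volume ≠ ⊤ := by
    intro x hx M hM
    have h1 : Ioi M ⊆ Ioi ((2:ℝ) ^ (0:ℕ)) := by
      intro z hz
      simp only [pow_zero, mem_Ioi] at hz ⊢
      linarith [hz, hM]
    refine ne_top_of_le_ne_top ?_ (lintegral_mono_set h1)
    exact ne_top_of_le_ne_top ENNReal.ofReal_ne_top (htail_enn x hx 0)
  -- main epsilon argument
  set I : ℝ := ∫ z in Ioi (1:ℝ), (z - 1) ^ (δ - 1) * z ^ (-β) ∂volume with hI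
  rw [Metric.tendsto_nhds]
  intro ε hε
  -- choose m
  have hAq : Tendsto (fun m : ℕ => A * q ^ m) atTop (nhds 0) := by
    have := tendsto_pow_atTop_nhds_zero_of_lt_one hq0.le hq1
    simpa using this.const_mul A
  have hIm := aux_Im_tendsto hδ hδβ
  have hev1 : ∀ᶠ m : ℕ in atTop, A * q ^ m < ε / 3 := by
    have := hAq.eventually_lt_const (by linarith : (0:ℝ) < ε / 3)
    exact this
  have hev2 : ∀ᶠ m : ℕ in atTop,
      dist (∫ z in Ioc (1:ℝ) ((2:ℝ) ^ m), (z - 1) ^ (δ - 1) * z ^ (-β) ∂volume) I < ε / 3 :=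
    Metric.tendsto_nhds.mp hIm (ε / 3) (by linarith)
  obtain ⟨m, hm1, hm2⟩ := (hev1.and hev2).exists
  set M : ℝ := (2:ℝ) ^ m with hM
  have hM1 : (1:ℝ) ≤ M := one_le_pow₀ (by norm_num)
  set Im : ℝ := ∫ z in Ioc (1:ℝ) M, (z - 1) ^ (δ - 1) * z ^ (-β) ∂volume with hImdef
  -- DCT part
  have hdct := aux_dct μ Z Fbar hFbar hpos hδ hRV hM1
  have hev3 : ∀ᶠ y : ℝ in atTop,
      dist (∫ z in Ioc (1:ℝ) M, (z - 1) ^ (δ - 1) * (Fbar (y * z) / Fbar y) ∂volume) Im < ε / 3 :=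
    Metric.tendsto_nhds.mp hdct (ε / 3) (by linarith)
  filter_upwards [hev3, eventually_ge_atTop x₀] with y hy3 hyx₀
  -- split the integral
  set ν : ℝ → ℝ≥0∞ := fun v => μ {ω | v < Z ω} with hν
  set f : ℝ → ℝ≥0∞ := fun z => ν (y * z) * ENNReal.ofReal ((z - 1) ^ (δ - 1)) with hf
  have hsplit : ∫⁻ z in Ioi (1:ℝ), f z ∂volume
      = (∫⁻ z in Ioc (1:ℝ) M, f z ∂volume) + ∫⁻ z in Ioi M, f z ∂volume := by
    rw [← lintegral_union measurableSet_Ioi]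
    · rw [Ioc_union_Ioi_eq_Ioi hM1]
    · exact Set.Ioc_disjoint_Ioi le_rfl
  have hKt_ne : ∫⁻ z in Ioi M, f z ∂volume ≠ ⊤ := hfin y hyx₀ M hM1
  have hKc_ne : ∫⁻ z in Ioc (1:ℝ) M, f z ∂volume ≠ ⊤ := by
    have h1 : Ioc (1:ℝ) M ⊆ Ioi ((2:ℝ) ^ (0:ℕ)) := by
      intro z hz
      simp only [pow_zero, mem_Ioi]
      exact hz.1
    refine ne_top_of_le_ne_top ?_ (lintegral_mono_set h1)
    exact ne_top_of_le_ne_top ENNReal.ofReal_ne_top (htail_enn y hyx₀ 0)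
  have htoReal : (∫⁻ z in Ioi (1:ℝ), f z ∂volume).toReal
      = (∫⁻ z in Ioc (1:ℝ) M, f z ∂volume).toReal + (∫⁻ z in Ioi M, f z ∂volume).toReal := by
    rw [hsplit, ENNReal.toReal_add hKc_ne hKt_ne]
  have hKc_eq : (∫⁻ z in Ioc (1:ℝ) M, f z ∂volume).toReal
      = ∫ z in Ioc (1:ℝ) M, (z - 1) ^ (δ - 1) * Fbar (y * z) ∂volume :=
    aux_compact_eq μ Z Fbar hFbar hδ y M
  have hdiv : (∫ z in Ioc (1:ℝ) M, (z - 1) ^ (δ - 1) * Fbar (y * z) ∂volume) / Fbar y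
      = ∫ z in Ioc (1:ℝ) M, (z - 1) ^ (δ - 1) * (Fbar (y * z) / Fbar y) ∂volume := by
    rw [← integral_div]
    congr 1
    ext z
    ring
  have htail_y : (∫⁻ z in Ioi M, f z ∂volume).toReal / Fbar y ≤ A * q ^ m := by
    rw [div_le_iff₀ (hpos y)]
    exact htail_real y hyx₀ m
  have htail_y0 : 0 ≤ (∫⁻ z in Ioi M, f z ∂volume).toReal / Fbar y :=
    div_nonneg ENNReal.toReal_nonneg (hpos y).le
  -- assemble
  rw [Real.dist_eq]
  have hcompact : |(∫⁻ z in Ioc (1:ℝ) M, f z ∂volume).toReal / Fbar y - Im| < ε / 3 := by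
    rw [hKc_eq, hdiv]
    rw [Real.dist_eq] at hy3
    exact hy3
  have hImI : |Im - I| < ε / 3 := by
    rw [Real.dist_eq] at hm2
    exact hm2
  have hexpand : (∫⁻ z in Ioi (1:ℝ), f z ∂volume).toReal / Fbar y - I
      = ((∫⁻ z in Ioc (1:ℝ) M, f z ∂volume).toReal / Fbar y - Im)
        + (∫⁻ z in Ioi M, f z ∂volume).toReal / Fbar y + (Im - I) := by
    rw [htoReal, add_div]
    ring
  calc |(∫⁻ z in Ioi (1:ℝ), f z ∂volume).toReal / Fbar y - I|
      ≤ |(∫⁻ z in Ioc (1:ℝ) M, f z ∂volume).toReal / Fbar y - Im|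
        + |(∫⁻ z in Ioi M, f z ∂volume).toReal / Fbar y| + |Im - I| := by
        rw [hexpand]
        exact le_trans (abs_add_le _ _) (add_le_add_left (abs_add_le _ _) _)
    _ < ε / 3 + ε / 3 + ε / 3 := by
        apply add_lt_add (add_lt_add_of_lt_of_le hcompact _) hImI
        rw [abs_of_nonneg htail_y0]
        exact le_of_lt (lt_of_le_of_lt htail_y hm1)
    _ = ε := by ring

end Aux

theorem stmt9 {Ω : Type*} [MeasurableSpace Ω] (μ : Measure Ω) [IsProbabilityMeasure μ]
    (Z : Ω → ℝ) (hZmeas : Measurable Z) (hZnonneg : ∀ ω, 0 ≤ Z ω)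
    (β : ℝ) (hβ : 2 < β) (δ : ℝ) (hδ2 : 2 ≤ δ) (hδβ : δ < β)
    (Fbar : ℝ → ℝ) (hFbar : ∀ x, Fbar x = (μ {ω | x < Z ω}).toReal)
    (hRV : ∀ s : ℝ, 0 < s →
      Tendsto (fun x : ℝ => Fbar (s * x) / Fbar x) atTop (nhds (s ^ (-β))))
    (hpos : ∀ x : ℝ, 0 < Fbar x) (s : ℝ) (hs : 0 < s) :
    Tendsto
      (fun x : ℝ =>
        (∫ ω, (max (Z ω - x * s) 0) ^ δ ∂μ) / (x ^ δ * Fbar x * s ^ (δ - β)))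
      atTop
      (nhds (δ * ∫ z in Set.Ioi (1 : ℝ), (z - 1) ^ (δ - 1) * z ^ (-β))) := by
  have hδ0 : (0:ℝ) < δ := by linarith
  set K : ℝ → ℝ≥0∞ := fun y =>
    ∫⁻ z in Ioi (1:ℝ), μ {ω | y * z < Z ω} * ENNReal.ofReal ((z - 1) ^ (δ - 1)) ∂volume with hK
  set I : ℝ := ∫ z in Set.Ioi (1 : ℝ), (z - 1) ^ (δ - 1) * z ^ (-β) with hI
  have hratio : Tendsto (fun y : ℝ => (K y).toReal / Fbar y) atTop (nhds I) :=
    aux_ratio_limit μ Z Fbar hFbar hpos hδ2 hδβ hRV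
  obtain ⟨x₀, hx₀1, hfin⟩ := aux_K_fin μ Z Fbar hFbar hpos hδ2 hδβ hRV
  -- limits
  have h1 : Tendsto (fun x : ℝ => x * s) atTop atTop := tendsto_id.atTop_mul_const hs
  have h2 : Tendsto (fun x : ℝ => (K (x * s)).toReal / Fbar (x * s)) atTop (nhds I) :=
    hratio.comp h1
  have h3 : Tendsto (fun x : ℝ => Fbar (x * s) / Fbar x) atTop (nhds (s ^ (-β))) :=
    (hRV s hs).congr fun x => by rw [mul_comm]
  have h4 : Tendsto (fun x : ℝ =>
      δ * s ^ β * ((K (x * s)).toReal / Fbar (x * s) * (Fbar (x * s) / Fbar x)))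
      atTop (nhds (δ * s ^ β * (I * s ^ (-β)))) :=
    (h2.mul h3).const_mul _
  have hlim_eq : δ * s ^ β * (I * s ^ (-β)) = δ * I := by
    have : s ^ β * s ^ (-β) = 1 := by
      rw [← Real.rpow_add hs]
      simp
    calc δ * s ^ β * (I * s ^ (-β)) = δ * I * (s ^ β * s ^ (-β)) := by ring
    _ = δ * I := by rw [this]; ring
  rw [← hlim_eq]
  apply h4.congr'
  -- eventual equality
  filter_upwards [eventually_ge_atTop (x₀ / s), eventually_gt_atTop (0:ℝ)] with x hxs hx0
  have hxs0 : 0 < x * s := mul_pos hx0 hs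
  have hxsx₀ : x₀ ≤ x * s := by
    rw [div_le_iff₀ hs] at hxs
    exact hxs
  -- numerator
  have hnn : 0 ≤ᵐ[μ] fun ω => (max (Z ω - x * s) 0) ^ δ :=
    .of_forall fun ω => Real.rpow_nonneg (le_max_right _ _) _
  have hmeas : AEStronglyMeasurable (fun ω => (max (Z ω - x * s) 0) ^ δ) μ := by
    apply Measurable.aestronglyMeasurable
    exact ((Real.continuous_rpow_const hδ0.le).comp
      ((continuous_id.sub continuous_const).max continuous_const)).measurable.comp hZmeas
  have hnum : ∫ ω, (max (Z ω - x * s) 0) ^ δ ∂μ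
      = δ * ((x * s) ^ δ * (K (x * s)).toReal) := by
    rw [integral_eq_lintegral_of_nonneg_ae hnn hmeas,
      aux_layercake μ Z hZmeas hδ0 hxs0,
      ENNReal.toReal_mul, ENNReal.toReal_mul,
      ENNReal.toReal_ofReal hδ0.le, ENNReal.toReal_ofReal (Real.rpow_nonneg hxs0.le _)]
  rw [hnum]
  -- algebra
  have hxδ : (x * s) ^ δ = x ^ δ * s ^ δ := Real.mul_rpow hx0.le hs.le
  have hsδ : s ^ δ = s ^ (δ - β) * s ^ β := by
    rw [← Real.rpow_add hs]
    ring_nf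
  have hFx : Fbar x ≠ 0 := (hpos x).ne'
  have hFxs : Fbar (x * s) ≠ 0 := (hpos (x * s)).ne'
  have hxδ0 : x ^ δ ≠ 0 := (Real.rpow_pos_of_pos hx0 _).ne'
  have hsδβ0 : s ^ (δ - β) ≠ 0 := (Real.rpow_pos_of_pos hs _).ne'
  rw [hxδ, hsδ]
  field_simp
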